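/- Let n ≥ 1, z ∈ ℂ∖ℝ, 1 ≤ r ≤ n, and let A, B : ℝ³ → Mₙ(ℂ). Let V : ℝ³ → M_{n×r}(ℂ) be continuously differentiable with V(p) of rank r for every p, satisfying z∂_xV − ∂_uV = AV and z∂_vV − ∂_xV = BV on ℝ³. Then π := V(V*V)⁻¹V* is a well-defined continuously differentiable family of Hermitian projections whose range at each p is the column span of V(p), and π satisfies π^⊥(z∂_xπ − ∂_uπ − Aπ) = 0 and π^⊥(z∂_vπ − ∂_xπ − Bπ) = 0 on ℝ³. -/

import Mathlib

open Matrix Complex Filter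

noncomputable section

/-- A Hermitian projection of ℂⁿ: a matrix with π* = π and π² = π. -/
def IsHermitianProj {n : ℕ} (π : Matrix (Fin n) (Fin n) ℂ) : Prop :=
  πᴴ = π ∧ π * π = π

/-- The simple element g_{z,π}(λ) = I + ((z - conj z)/(λ - z))·(I - π). -/
def simpleElt {n : ℕ} (z : ℂ) (π : Matrix (Fin n) (Fin n) ℂ) (lam : ℂ) :
    Matrix (Fin n) (Fin n) ℂ :=
  1 + ((z - (starRingEnd ℂ) z) / (lam - z)) • (1 - π)

/-- The range of the linear map defined by a matrix. -/
def mrange {n m : ℕ} (A : Matrix (Fin n) (Fin m) ℂ) :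
    Submodule ℂ (EuclideanSpace ℂ (Fin n)) :=
  LinearMap.range (Matrix.toEuclideanLin A)

/-- Entrywise partial derivative ∂_x of a matrix-valued map on ℝ³, p = (x,u,v). -/
def pdx {m k : Type*} (F : ℝ × ℝ × ℝ → Matrix m k ℂ) (p : ℝ × ℝ × ℝ) : Matrix m k ℂ :=
  fun i j => deriv (fun s => F (s, p.2.1, p.2.2) i j) p.1

/-- Entrywise partial derivative ∂_u of a matrix-valued map on ℝ³, p = (x,u,v). -/
def pdu {m k : Type*} (F : ℝ × ℝ × ℝ → Matrix m k ℂ) (p : ℝ × ℝ × ℝ) : Matrix m k ℂ :=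
  fun i j => deriv (fun s => F (p.1, s, p.2.2) i j) p.2.1

/-- Entrywise partial derivative ∂_v of a matrix-valued map on ℝ³, p = (x,u,v). -/
def pdv {m k : Type*} (F : ℝ × ℝ × ℝ → Matrix m k ℂ) (p : ℝ × ℝ × ℝ) : Matrix m k ℂ :=
  fun i j => deriv (fun s => F (p.1, p.2.1, s) i j) p.2.2

/-- The Hermitian projection onto the column span of a full-rank n×r matrix V,
π = V(V*V)⁻¹V*. -/
def projOf {n r : ℕ} (V : Matrix (Fin n) (Fin r) ℂ) : Matrix (Fin n) (Fin n) ℂ :=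
  V * (Vᴴ * V)⁻¹ * Vᴴ

/-! ### Auxiliary lemmas -/

private lemma contDiff_finprod {E : Type*} [NormedAddCommGroup E] [NormedSpace ℝ E]
    {ι : Type*} (s : Finset ι) (f : ι → E → ℂ)
    (hf : ∀ i, ContDiff ℝ 1 (f i)) :
    ContDiff ℝ 1 (fun p => ∏ i ∈ s, f i p) := by
  classical
  induction s using Finset.induction with
  | empty => simpa using contDiff_const
  | insert _ _ h ih => simp only [Finset.prod_insert h]; exact (hf _).mul ih

private lemma contDiff_matdet {E : Type*} [NormedAddCommGroup E] [NormedSpace ℝ E]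
    {k : ℕ} (M : E → Matrix (Fin k) (Fin k) ℂ)
    (hM : ∀ i j, ContDiff ℝ 1 (fun p => M p i j)) :
    ContDiff ℝ 1 (fun p => (M p).det) := by
  simp only [Matrix.det_apply']
  exact ContDiff.sum fun σ _ => contDiff_const.mul (contDiff_finprod _ _ fun i => hM _ _)

private lemma contDiff_inv_entry {E : Type*} [NormedAddCommGroup E] [NormedSpace ℝ E]
    {k : ℕ} (M : E → Matrix (Fin k) (Fin k) ℂ)
    (hM : ∀ i j, ContDiff ℝ 1 (fun p => M p i j))
    (hU : ∀ p, IsUnit (M p)) (a b : Fin k) :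
    ContDiff ℝ 1 (fun p => (M p)⁻¹ a b) := by
  have hdet : ∀ p, (M p).det ≠ 0 := fun p =>
    (Matrix.isUnit_iff_isUnit_det _).mp (hU p) |>.ne_zero
  have hinv : ∀ p, (M p)⁻¹ a b = ((M p).det)⁻¹ * (M p).adjugate a b := by
    intro p
    rw [Matrix.inv_def, Matrix.smul_apply, Ring.inverse_eq_inv', smul_eq_mul]
  simp only [hinv]
  refine ContDiff.mul ((contDiff_matdet M hM).inv hdet) ?_
  simp only [Matrix.adjugate_apply]
  apply contDiff_matdet
  intro i j
  by_cases hib : i = b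
  · subst hib
    simp only [Matrix.updateRow_self]
    exact contDiff_const
  · simp only [Matrix.updateRow_ne hib]
    exact hM i j

private lemma contDiff_mul_entry {E : Type*} [NormedAddCommGroup E] [NormedSpace ℝ E]
    {a b c : ℕ} (M : E → Matrix (Fin a) (Fin b) ℂ) (N : E → Matrix (Fin b) (Fin c) ℂ)
    (hM : ∀ i j, ContDiff ℝ 1 (fun p => M p i j))
    (hN : ∀ i j, ContDiff ℝ 1 (fun p => N p i j)) (i : Fin a) (j : Fin c) :
    ContDiff ℝ 1 (fun p => (M p * N p) i j) := by
  simp only [Matrix.mul_apply]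
  exact ContDiff.sum fun k _ => (hM i k).mul (hN k j)

open scoped ComplexOrder in
private lemma gram_isUnit {n r : ℕ} (M : Matrix (Fin n) (Fin r) ℂ) (h : M.rank = r) :
    IsUnit (Mᴴ * M) := by
  rw [← Matrix.mulVec_surjective_iff_isUnit]
  have hrk : (Mᴴ * M).rank = r := by rw [Matrix.rank_conjTranspose_mul_self]; exact h
  have htop : LinearMap.range (Mᴴ * M).mulVecLin = ⊤ := by
    apply Submodule.eq_top_of_finrank_eq
    rw [Matrix.rank] at hrk
    rw [hrk, Module.finrank_fintype_fun_eq_card, Fintype.card_fin]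
  intro y
  obtain ⟨x, hx⟩ := LinearMap.range_eq_top.mp htop y
  exact ⟨x, hx⟩

private lemma projOf_mul_self_V {n r : ℕ} (M : Matrix (Fin n) (Fin r) ℂ)
    (h : IsUnit (Mᴴ * M)) : projOf M * M = M := by
  have hdet : IsUnit (Mᴴ * M).det := (Matrix.isUnit_iff_isUnit_det _).mp h
  calc projOf M * M = M * ((Mᴴ * M)⁻¹ * (Mᴴ * M)) := by
        simp only [projOf, Matrix.mul_assoc]
    _ = M := by rw [Matrix.nonsing_inv_mul _ hdet, Matrix.mul_one]

private lemma projOf_herm {n r : ℕ} (M : Matrix (Fin n) (Fin r) ℂ) :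
    (projOf M)ᴴ = projOf M := by
  simp only [projOf, Matrix.conjTranspose_mul, Matrix.conjTranspose_conjTranspose,
    Matrix.conjTranspose_nonsing_inv, Matrix.mul_assoc]

private lemma projOf_idem {n r : ℕ} (M : Matrix (Fin n) (Fin r) ℂ)
    (h : IsUnit (Mᴴ * M)) : projOf M * projOf M = projOf M := by
  calc projOf M * projOf M = (projOf M * M) * ((Mᴴ * M)⁻¹ * Mᴴ) := by
        simp only [projOf, Matrix.mul_assoc]
    _ = projOf M := by rw [projOf_mul_self_V M h, projOf, Matrix.mul_assoc]

private lemma mrange_mul_le {n m k : ℕ} (A : Matrix (Fin n) (Fin m) ℂ)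
    (B : Matrix (Fin m) (Fin k) ℂ) : mrange (A * B) ≤ mrange A := by
  rintro y ⟨x, rfl⟩
  refine ⟨Matrix.toEuclideanLin B x, ?_⟩
  simp [mrange, Matrix.toEuclideanLin_apply, Matrix.mulVec_mulVec]

private lemma mrange_eq_of {n r : ℕ} (P : Matrix (Fin n) (Fin n) ℂ)
    (V : Matrix (Fin n) (Fin r) ℂ) (W : Matrix (Fin r) (Fin n) ℂ)
    (hPV : P = V * W) (hVP : P * V = V) : mrange P = mrange V := by
  refine le_antisymm ?_ ?_
  · rw [hPV]; exact mrange_mul_le V W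
  · rw [← hVP]; exact mrange_mul_le P V

private lemma deriv_matrix_mul {a b c : ℕ} (F : ℝ → Matrix (Fin a) (Fin b) ℂ)
    (G : ℝ → Matrix (Fin b) (Fin c) ℂ) (t : ℝ)
    (hF : ∀ i j, DifferentiableAt ℝ (fun s => F s i j) t)
    (hG : ∀ i j, DifferentiableAt ℝ (fun s => G s i j) t) (i : Fin a) (j : Fin c) :
    deriv (fun s => (F s * G s) i j) t
      = ((Matrix.of fun i' j' => deriv (fun s => F s i' j') t) * G t
        + F t * Matrix.of fun i' j' => deriv (fun s => G s i' j') t) i j := by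
  simp only [Matrix.mul_apply]
  rw [deriv_fun_sum (A := fun k s => F s i k * G s k j) (fun k _ => (hF i k).mul (hG k j))]
  simp only [Matrix.add_apply, Matrix.mul_apply]
  rw [← Finset.sum_add_distrib]
  congr 1
  funext k
  rw [deriv_fun_mul (hF i k) (hG k j)]
  rfl

private lemma pdx_mul {a b c : ℕ} (F : ℝ×ℝ×ℝ → Matrix (Fin a) (Fin b) ℂ)
    (G : ℝ×ℝ×ℝ → Matrix (Fin b) (Fin c) ℂ)
    (hF : ∀ i j, ContDiff ℝ 1 (fun p => F p i j))
    (hG : ∀ i j, ContDiff ℝ 1 (fun p => G p i j)) (p : ℝ×ℝ×ℝ) :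
    pdx (fun q => F q * G q) p = pdx F p * G p + F p * pdx G p := by
  have hline : ContDiff ℝ 1 (fun s : ℝ => ((s, p.2.1, p.2.2) : ℝ×ℝ×ℝ)) :=
    contDiff_id.prodMk contDiff_const
  funext i j
  exact deriv_matrix_mul (fun s => F (s, p.2.1, p.2.2)) (fun s => G (s, p.2.1, p.2.2)) p.1
    (fun i j => (((hF i j).comp hline).differentiable one_ne_zero).differentiableAt)
    (fun i j => (((hG i j).comp hline).differentiable one_ne_zero).differentiableAt) i j

private lemma pdu_mul {a b c : ℕ} (F : ℝ×ℝ×ℝ → Matrix (Fin a) (Fin b) ℂ)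
    (G : ℝ×ℝ×ℝ → Matrix (Fin b) (Fin c) ℂ)
    (hF : ∀ i j, ContDiff ℝ 1 (fun p => F p i j))
    (hG : ∀ i j, ContDiff ℝ 1 (fun p => G p i j)) (p : ℝ×ℝ×ℝ) :
    pdu (fun q => F q * G q) p = pdu F p * G p + F p * pdu G p := by
  have hline : ContDiff ℝ 1 (fun s : ℝ => ((p.1, s, p.2.2) : ℝ×ℝ×ℝ)) :=
    contDiff_const.prodMk (contDiff_id.prodMk contDiff_const)
  funext i j
  exact deriv_matrix_mul (fun s => F (p.1, s, p.2.2)) (fun s => G (p.1, s, p.2.2)) p.2.1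
    (fun i j => (((hF i j).comp hline).differentiable one_ne_zero).differentiableAt)
    (fun i j => (((hG i j).comp hline).differentiable one_ne_zero).differentiableAt) i j

private lemma pdv_mul {a b c : ℕ} (F : ℝ×ℝ×ℝ → Matrix (Fin a) (Fin b) ℂ)
    (G : ℝ×ℝ×ℝ → Matrix (Fin b) (Fin c) ℂ)
    (hF : ∀ i j, ContDiff ℝ 1 (fun p => F p i j))
    (hG : ∀ i j, ContDiff ℝ 1 (fun p => G p i j)) (p : ℝ×ℝ×ℝ) :
    pdv (fun q => F q * G q) p = pdv F p * G p + F p * pdv G p := by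
  have hline : ContDiff ℝ 1 (fun s : ℝ => ((p.1, p.2.1, s) : ℝ×ℝ×ℝ)) :=
    contDiff_const.prodMk (contDiff_const.prodMk contDiff_id)
  funext i j
  exact deriv_matrix_mul (fun s => F (p.1, p.2.1, s)) (fun s => G (p.1, p.2.1, s)) p.2.2
    (fun i j => (((hF i j).comp hline).differentiable one_ne_zero).differentiableAt)
    (fun i j => (((hG i j).comp hline).differentiable one_ne_zero).differentiableAt) i j

private lemma keyAlg {n r : ℕ} (π Pd C : Matrix (Fin n) (Fin n) ℂ)
    (Vm Vd : Matrix (Fin n) (Fin r) ℂ) (W : Matrix (Fin r) (Fin n) ℂ)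
    (hπ2 : π * π = π) (hfact : π = Vm * W)
    (ha : Pd * Vm + π * Vd = Vd) (hb : Pd * π + π * Pd = Pd) (hd : Vd = C * Vm) :
    (1 - π) * (Pd - C * π) = 0 := by
  have hz : (1 - π) * π = 0 := by rw [sub_mul, one_mul, hπ2, sub_self]
  have e0 : Pd * π + π * Pd - Pd = 0 := sub_eq_zero.mpr hb
  have h1 : (1 - π) * Pd * π = (1 - π) * Pd := by
    have h : (1 - π) * Pd * π - (1 - π) * Pd
        = (1 - π) * (Pd * π + π * Pd - Pd) - ((1 - π) * π) * Pd := by noncomm_ring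
    rw [e0, hz] at h
    simp only [mul_zero, zero_mul, sub_zero] at h
    exact sub_eq_zero.mp h
  have hN : (1 - π) * (Pd - C) * Vm = 0 := by
    have hPdVm : Pd * Vm = Vd - π * Vd := eq_sub_of_add_eq ha
    calc (1 - π) * (Pd - C) * Vm = (1 - π) * ((Pd - C) * Vm) := Matrix.mul_assoc _ _ _
      _ = (1 - π) * (Pd * Vm - C * Vm) := by congr 1; exact Matrix.sub_mul _ _ _
      _ = (1 - π) * (Vd - π * Vd - Vd) := by rw [hPdVm, ← hd]
      _ = -((1 - π) * π * Vd) := by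
          rw [sub_sub_cancel_left, Matrix.mul_neg, Matrix.mul_assoc]
      _ = 0 := by rw [hz, Matrix.zero_mul, neg_zero]
  have hNπ : (1 - π) * (Pd - C) * π = 0 := by
    have h : (1 - π) * (Pd - C) * π = ((1 - π) * (Pd - C)) * (Vm * W) := by rw [← hfact]
    rw [h, ← Matrix.mul_assoc, hN, Matrix.zero_mul]
  have h : (1 - π) * (Pd - C * π)
      = (1 - π) * (Pd - C) * π + ((1 - π) * Pd - (1 - π) * Pd * π) := by noncomm_ring
  rw [hNπ, h1] at h
  simpa using h

/-- Converse part of Lemma 8.2: if V is a C¹ rank-r solution of zV_x − V_u = AV,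
zV_v − V_x = BV, then π = V(V*V)⁻¹V* is a well-defined C¹ family of Hermitian projections
whose range is the column span of V, and π solves the analytic BT equations. -/
theorem statement17 {n : ℕ} (hn : 1 ≤ n) (z : ℂ) (hz : z.im ≠ 0)
    (r : ℕ) (hr1 : 1 ≤ r) (hrn : r ≤ n)
    (A B : ℝ × ℝ × ℝ → Matrix (Fin n) (Fin n) ℂ)
    (V : ℝ × ℝ × ℝ → Matrix (Fin n) (Fin r) ℂ)
    (hVC1 : ∀ i j, ContDiff ℝ 1 (fun p => V p i j))
    (hVrank : ∀ p, (V p).rank = r)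
    (hV1 : ∀ p, z • pdx V p - pdu V p = A p * V p)
    (hV2 : ∀ p, z • pdv V p - pdx V p = B p * V p) :
    (∀ p, IsUnit ((V p)ᴴ * V p)) ∧
    (∀ p, IsHermitianProj (projOf (V p))) ∧
    (∀ i j, ContDiff ℝ 1 (fun p => projOf (V p) i j)) ∧
    (∀ p, mrange (projOf (V p)) = mrange (V p)) ∧
    (∀ p, (1 - projOf (V p)) *
        (z • pdx (fun q => projOf (V q)) p - pdu (fun q => projOf (V q)) p
          - A p * projOf (V p)) = 0) ∧
    (∀ p, (1 - projOf (V p)) *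
        (z • pdv (fun q => projOf (V q)) p - pdx (fun q => projOf (V q)) p
          - B p * projOf (V p)) = 0) := by
  have hGu : ∀ p, IsUnit ((V p)ᴴ * V p) := fun p => gram_isUnit (V p) (hVrank p)
  -- conjugate transpose entries are C¹
  have hVH : ∀ i j, ContDiff ℝ 1 (fun p => (V p)ᴴ i j) := by
    intro i j
    simp only [Matrix.conjTranspose_apply]
    exact Complex.conjCLE.contDiff.comp (hVC1 j i)
  -- Gram matrix entries are C¹
  have hGC1 : ∀ a b, ContDiff ℝ 1 (fun p => ((V p)ᴴ * V p) a b) :=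
    contDiff_mul_entry _ _ hVH hVC1
  -- inverse Gram entries are C¹
  have hGinvC1 : ∀ a b, ContDiff ℝ 1 (fun p => ((V p)ᴴ * V p)⁻¹ a b) :=
    contDiff_inv_entry _ hGC1 hGu
  -- projection entries are C¹
  have hπC1 : ∀ i j, ContDiff ℝ 1 (fun p => projOf (V p) i j) := by
    intro i j
    have : ∀ i j, ContDiff ℝ 1 (fun p => (V p * ((V p)ᴴ * V p)⁻¹) i j) :=
      contDiff_mul_entry _ _ hVC1 hGinvC1
    exact contDiff_mul_entry (fun p => V p * ((V p)ᴴ * V p)⁻¹) (fun p => (V p)ᴴ) this hVH i j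
  have hπV : ∀ p, projOf (V p) * V p = V p := fun p => projOf_mul_self_V (V p) (hGu p)
  have hπ2 : ∀ p, projOf (V p) * projOf (V p) = projOf (V p) :=
    fun p => projOf_idem (V p) (hGu p)
  have hfact : ∀ p, projOf (V p) = V p * (((V p)ᴴ * V p)⁻¹ * (V p)ᴴ) :=
    fun p => Matrix.mul_assoc _ _ _
  set Pr : ℝ×ℝ×ℝ → Matrix (Fin n) (Fin n) ℂ := fun q => projOf (V q) with hPr
  have hPrV : (fun q => Pr q * V q) = V := funext fun q => hπV q
  have hPrPr : (fun q => Pr q * Pr q) = Pr := funext fun q => hπ2 q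
  refine ⟨hGu, fun p => ⟨projOf_herm (V p), hπ2 p⟩, hπC1,
    fun p => mrange_eq_of _ _ _ (hfact p) (hπV p), ?_, ?_⟩
  · -- first BT equation
    intro p
    have ex : pdx Pr p * V p + Pr p * pdx V p = pdx V p := by
      have h := pdx_mul Pr V hπC1 hVC1 p
      rw [hPrV] at h
      exact h.symm
    have eu : pdu Pr p * V p + Pr p * pdu V p = pdu V p := by
      have h := pdu_mul Pr V hπC1 hVC1 p
      rw [hPrV] at h
      exact h.symm
    have e2x : pdx Pr p * Pr p + Pr p * pdx Pr p = pdx Pr p := by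
      have h := pdx_mul Pr Pr hπC1 hπC1 p
      rw [hPrPr] at h
      exact h.symm
    have e2u : pdu Pr p * Pr p + Pr p * pdu Pr p = pdu Pr p := by
      have h := pdu_mul Pr Pr hπC1 hπC1 p
      rw [hPrPr] at h
      exact h.symm
    have ha : (z • pdx Pr p - pdu Pr p) * V p + Pr p * (z • pdx V p - pdu V p)
        = z • pdx V p - pdu V p := by
      have ex' : pdx Pr p * V p = pdx V p - Pr p * pdx V p := eq_sub_of_add_eq ex
      have eu' : pdu Pr p * V p = pdu V p - Pr p * pdu V p := eq_sub_of_add_eq eu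
      simp only [Matrix.sub_mul, Matrix.smul_mul, ex', eu', Matrix.mul_sub,
        Matrix.mul_smul, smul_sub]
      abel
    have hb : (z • pdx Pr p - pdu Pr p) * Pr p + Pr p * (z • pdx Pr p - pdu Pr p)
        = z • pdx Pr p - pdu Pr p := by
      have ex' : pdx Pr p * Pr p = pdx Pr p - Pr p * pdx Pr p := eq_sub_of_add_eq e2x
      have eu' : pdu Pr p * Pr p = pdu Pr p - Pr p * pdu Pr p := eq_sub_of_add_eq e2u
      simp only [Matrix.sub_mul, Matrix.smul_mul, ex', eu', Matrix.mul_sub,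
        Matrix.mul_smul, smul_sub]
      abel
    exact keyAlg (Pr p) (z • pdx Pr p - pdu Pr p) (A p) (V p)
      (z • pdx V p - pdu V p) (((V p)ᴴ * V p)⁻¹ * (V p)ᴴ)
      (hπ2 p) (hfact p) ha hb (hV1 p)
  · -- second BT equation
    intro p
    have ev : pdv Pr p * V p + Pr p * pdv V p = pdv V p := by
      have h := pdv_mul Pr V hπC1 hVC1 p
      rw [hPrV] at h
      exact h.symm
    have ex : pdx Pr p * V p + Pr p * pdx V p = pdx V p := by
      have h := pdx_mul Pr V hπC1 hVC1 p
      rw [hPrV] at h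
      exact h.symm
    have e2v : pdv Pr p * Pr p + Pr p * pdv Pr p = pdv Pr p := by
      have h := pdv_mul Pr Pr hπC1 hπC1 p
      rw [hPrPr] at h
      exact h.symm
    have e2x : pdx Pr p * Pr p + Pr p * pdx Pr p = pdx Pr p := by
      have h := pdx_mul Pr Pr hπC1 hπC1 p
      rw [hPrPr] at h
      exact h.symm
    have ha : (z • pdv Pr p - pdx Pr p) * V p + Pr p * (z • pdv V p - pdx V p)
        = z • pdv V p - pdx V p := by
      have ev' : pdv Pr p * V p = pdv V p - Pr p * pdv V p := eq_sub_of_add_eq ev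
      have ex' : pdx Pr p * V p = pdx V p - Pr p * pdx V p := eq_sub_of_add_eq ex
      simp only [Matrix.sub_mul, Matrix.smul_mul, ev', ex', Matrix.mul_sub,
        Matrix.mul_smul, smul_sub]
      abel
    have hb : (z • pdv Pr p - pdx Pr p) * Pr p + Pr p * (z • pdv Pr p - pdx Pr p)
        = z • pdv Pr p - pdx Pr p := by
      have ev' : pdv Pr p * Pr p = pdv Pr p - Pr p * pdv Pr p := eq_sub_of_add_eq e2v
      have ex' : pdx Pr p * Pr p = pdx Pr p - Pr p * pdx Pr p := eq_sub_of_add_eq e2x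
      simp only [Matrix.sub_mul, Matrix.smul_mul, ev', ex', Matrix.mul_sub,
        Matrix.mul_smul, smul_sub]
      abel
    exact keyAlg (Pr p) (z • pdv Pr p - pdx Pr p) (B p) (V p)
      (z • pdv V p - pdx V p) (((V p)ᴴ * V p)⁻¹ * (V p)ᴴ)
      (hπ2 p) (hfact p) ha hb (hV2 p)
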